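/- With c₁†, c₂† as defined by the type A_2^{(2)†} recurrences, one has c₁†(k22,k21,k11) = q^{k21(k21-1) + 2k22 + 2k21} · qmultinomial(k22+k21+k11; k22,k21,k11)_{q²}. -/
import Mathlib


open Polynomial

/-- Gaussian binomial coefficient in `ℤ[q]`, via the `q`-Pascal recurrence;
equals `(q)_n / ((q)_k (q)_{n-k})`. -/
noncomputable def qbinom : ℕ → ℕ → Polynomial ℤ
  | _, 0 => 1
  | 0, _ + 1 => 0
  | n + 1, k + 1 => qbinom n k + X ^ (k + 1) * qbinom n (k + 1)

/-- Gaussian multinomial coefficient `(a+b+c; a,b,c)_q = (q)_{a+b+c}/((q)_a(q)_b(q)_c)`. -/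
noncomputable def qmult (a b c : ℕ) : Polynomial ℤ :=
  qbinom (a + b + c) a * qbinom (b + c) b


lemma qbinom_n_zero (n : ℕ) : qbinom n 0 = 1 := by cases n <;> rfl

lemma qbinom_succ (n k : ℕ) :
    qbinom (n + 1) (k + 1) = qbinom n k + X ^ (k + 1) * qbinom n (k + 1) := rfl

lemma qbinom_of_lt : ∀ n k : ℕ, n < k → qbinom n k = 0 := by
  intro n
  induction n with
  | zero => intro k hk; cases k with | zero => omega | succ j => rfl
  | succ n IH =>
    intro k hk
    cases k with
    | zero => omega
    | succ j =>
      rw [qbinom_succ, IH j (by omega), IH (j+1) (by omega)]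
      ring

lemma qbinom_absorb : ∀ n k : ℕ,
    (1 - X ^ (k + 1)) * qbinom n (k + 1) = (1 - (X : Polynomial ℤ) ^ (n - k)) * qbinom n k := by
  intro n
  induction n with
  | zero =>
    intro k
    cases k <;> simp [qbinom, qbinom_n_zero]
  | succ n IH =>
    intro k
    cases k with
    | zero =>
      rw [qbinom_succ]
      have h := IH 0
      simp only [qbinom_n_zero, Nat.sub_zero, mul_one, pow_one] at h ⊢
      linear_combination X * h
    | succ j =>
      rw [qbinom_succ, qbinom_succ]
      rcases le_or_gt (j + 1) n with hle | hlt
      · obtain ⟨d, hd⟩ : ∃ d, n - j = d + 1 := ⟨n - (j + 1), by omega⟩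
        have hd2 : n - (j + 1) = d := by omega
        have h1 := IH j
        have h2 := IH (j + 1)
        rw [hd] at h1
        rw [hd2] at h2
        rw [show n + 1 - (j + 1) = d + 1 from by omega]
        linear_combination h1 + X ^ (j + 2) * h2
      · rw [qbinom_of_lt n (j + 1) hlt, qbinom_of_lt n (j + 2) (by omega)]
        rcases Nat.lt_or_ge n j with h' | h'
        · rw [qbinom_of_lt n j h']; simp
        · have : n = j := by omega
          subst this
          rw [show n + 1 - (n + 1) = 0 from by omega]
          simp

lemma qbinom_absorb' (n k : ℕ) :
    (1 - X ^ (n + 1)) * qbinom n k = (1 - (X : Polynomial ℤ) ^ (n + 1 - k)) * qbinom (n + 1) k := by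
  cases k with
  | zero => simp [qbinom_n_zero]
  | succ j =>
    rw [qbinom_succ]
    rcases le_or_gt (j + 1) n with hle | hlt
    · have h := qbinom_absorb n j
      rw [show n + 1 - (j + 1) = n - j from by omega]
      obtain ⟨d, hd⟩ : ∃ d, n - j = d := ⟨_, rfl⟩
      rw [hd] at h ⊢
      rw [show n + 1 = j + 1 + d from by omega]
      linear_combination h
    · rw [qbinom_of_lt n (j + 1) hlt, show n + 1 - (j + 1) = 0 from by omega]
      simp

lemma qmult_rec1 (a b c : ℕ) (h : 1 ≤ a + b + c) :
    qmult a b c = (if a = 0 then 0 else qmult (a - 1) b c)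
      + X ^ a * (if b = 0 then 0 else qmult a (b - 1) c)
      + X ^ (a + b) * (if c = 0 then 0 else qmult a b (c - 1)) := by
  rcases a with _ | a <;> rcases b with _ | b <;> rcases c with _ | c <;>
    simp only [qmult, qbinom_n_zero, Nat.add_sub_cancel, Nat.succ_ne_zero, if_false,
      if_pos rfl, Nat.zero_add, Nat.add_zero, one_mul, mul_one, pow_zero, zero_add, add_zero,
      ite_false, ite_true, reduceIte]
  · omega
  · -- zero.succ.zero
    rw [qbinom_succ, qbinom_of_lt b (b + 1) (by omega)]
  · -- zero.succ.succ
    rw [show b + 1 + (c + 1) = (b + (c + 1)) + 1 from by omega, qbinom_succ,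
        show b + (c + 1) = b + 1 + c from by omega]
  · -- succ.zero.zero
    rw [qbinom_succ, qbinom_of_lt a (a + 1) (by omega)]
    ring
  · -- succ.zero.succ
    rw [show a + 1 + (c + 1) = (a + (c + 1)) + 1 from by omega, qbinom_succ,
        show a + (c + 1) = a + 1 + c from by omega]
    ring
  · -- succ.succ.zero
    rw [show a + 1 + (b + 1) = (a + (b + 1)) + 1 from by omega, qbinom_succ,
        qbinom_succ b b, qbinom_of_lt b (b + 1) (by omega),
        show a + (b + 1) = a + 1 + b from by omega]
    ring
  · -- succ.succ.succ
    rw [show a + 1 + (b + 1) + (c + 1) = (a + (b + 1) + (c + 1)) + 1 from by omega, qbinom_succ,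
        show b + 1 + (c + 1) = (b + (c + 1)) + 1 from by omega, qbinom_succ (b + (c + 1)) b,
        show a + 1 + b + (c + 1) = a + (b + 1) + (c + 1) from by omega,
        show a + 1 + (b + 1) + c = a + (b + 1) + (c + 1) from by omega,
        show b + 1 + c = b + (c + 1) from by omega]
    ring

lemma qmult_absorb (a b c : ℕ) :
    (1 - X ^ (c + 1)) * qmult a b (c + 1) = (1 - (X : Polynomial ℤ) ^ (a + b + c + 1)) * qmult a b c := by
  have h1 := qbinom_absorb' (b + c) b
  rw [show b + c + 1 - b = c + 1 from by omega] at h1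
  have h2 := qbinom_absorb' (a + b + c) a
  rw [show a + b + c + 1 - a = b + c + 1 from by omega] at h2
  unfold qmult
  rw [show a + b + (c + 1) = a + b + c + 1 from by omega,
      show b + (c + 1) = b + c + 1 from by omega]
  linear_combination (-(qbinom (a + b + c + 1) a)) * h1 - qbinom (b + c) b * h2

/-- if `c₁†, c₂† : ℤ³ → ℤ[q]` vanish on negative arguments, equal `1` at
`(0,0,0)`, and satisfy the type `A₂⁽²⁾†` recurrences
`c₁†(a,b,c) = q^{2n} c₂†(a-1,b,c) + q^{2n} c₁†(a,b-1,c) + c₁†(a,b,c-1)` and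
`c₂†(a,b,c) = c₂†(a-1,b,c) + c₁†(a,b-1,c) + c₁†(a,b,c-1)` with `n = a+b+c ≥ 1`,
then `c₁†(a,b,c) = q^{b(b-1)+2a+2b} · qmultinomial(a+b+c; a,b,c)` evaluated at `q²`. -/
theorem c1_dagger_closed_form
    (c₁ c₂ : ℤ → ℤ → ℤ → Polynomial ℤ)
    (hneg : ∀ a b c : ℤ, a < 0 ∨ b < 0 ∨ c < 0 → c₁ a b c = 0 ∧ c₂ a b c = 0)
    (hinit : c₁ 0 0 0 = 1 ∧ c₂ 0 0 0 = 1)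
    (hrec : ∀ a b c : ℕ, 1 ≤ a + b + c →
      c₁ a b c = X ^ (2 * (a + b + c)) * c₂ ((a : ℤ) - 1) b c
        + X ^ (2 * (a + b + c)) * c₁ a ((b : ℤ) - 1) c
        + c₁ a b ((c : ℤ) - 1) ∧
      c₂ a b c = c₂ ((a : ℤ) - 1) b c
        + c₁ a ((b : ℤ) - 1) c
        + c₁ a b ((c : ℤ) - 1)) :
    ∀ a b c : ℕ, c₁ a b c = X ^ (b * (b - 1) + 2 * a + 2 * b) * (qmult a b c).comp (X ^ 2) := by
  have hm : ∀ m : ℕ, (m + 1) * m = m * (m - 1) + 2 * m := by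
    intro m
    cases m with
    | zero => rfl
    | succ k => rw [Nat.add_sub_cancel]; ring
  have key : ∀ n : ℕ, ∀ a b c : ℕ, a + b + c = n →
      c₂ a b c = X ^ (b * (b - 1)) * (qmult a b c).comp (X ^ 2) ∧
      c₁ a b c = X ^ (b * (b - 1) + 2 * a + 2 * b) * (qmult a b c).comp (X ^ 2) := by
    intro n
    induction n using Nat.strong_induction_on with
    | _ n IH =>
      intro a b c hn
      rcases Nat.eq_zero_or_pos n with rfl | hpos
      · obtain ⟨rfl, rfl, rfl⟩ : a = 0 ∧ b = 0 ∧ c = 0 := by omega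
        constructor <;> simp [qmult, qbinom_n_zero, hinit.1, hinit.2]
      · obtain ⟨h1, h2⟩ := hrec a b c (by omega)
        have hA : c₂ ((a : ℤ) - 1) b c =
            if a = 0 then 0 else X ^ (b * (b - 1)) * (qmult (a - 1) b c).comp (X ^ 2) := by
          rcases a with _ | a'
          · rw [if_pos rfl]
            exact (hneg _ _ _ (Or.inl (by omega))).2
          · rw [if_neg (Nat.succ_ne_zero a'),
              show ((a' + 1 : ℕ) : ℤ) - 1 = (a' : ℤ) from by omega,
              Nat.add_sub_cancel]
            exact (IH (a' + b + c) (by omega) a' b c rfl).1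
        have hB : c₁ (a : ℤ) ((b : ℤ) - 1) c =
            if b = 0 then 0 else
              X ^ ((b - 1) * (b - 1 - 1) + 2 * a + 2 * (b - 1)) * (qmult a (b - 1) c).comp (X ^ 2) := by
          rcases b with _ | b'
          · rw [if_pos rfl]
            exact (hneg _ _ _ (Or.inr (Or.inl (by omega)))).1
          · rw [if_neg (Nat.succ_ne_zero b'),
              show ((b' + 1 : ℕ) : ℤ) - 1 = (b' : ℤ) from by omega,
              Nat.add_sub_cancel]
            exact (IH (a + b' + c) (by omega) a b' c rfl).2
        have hC : c₁ (a : ℤ) b ((c : ℤ) - 1) =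
            if c = 0 then 0 else
              X ^ (b * (b - 1) + 2 * a + 2 * b) * (qmult a b (c - 1)).comp (X ^ 2) := by
          rcases c with _ | c'
          · rw [if_pos rfl]
            exact (hneg _ _ _ (Or.inr (Or.inr (by omega)))).1
          · rw [if_neg (Nat.succ_ne_zero c'),
              show ((c' + 1 : ℕ) : ℤ) - 1 = (c' : ℤ) from by omega,
              Nat.add_sub_cancel]
            exact (IH (a + b + c') (by omega) a b c' rfl).2
        have hrc := congrArg (fun p : Polynomial ℤ => p.comp (X ^ 2)) (qmult_rec1 a b c (by omega))
        simp only [add_comp, mul_comp, X_pow_comp, zero_comp,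
          apply_ite (fun p : Polynomial ℤ => p.comp (X ^ 2)), ← pow_mul] at hrc
        have hc2 : c₂ (a : ℤ) b c = X ^ (b * (b - 1)) * (qmult a b c).comp (X ^ 2) := by
          rw [h2, hA, hB, hC, hrc]
          rcases b with _ | b'
          · simp only [Nat.zero_sub, Nat.mul_zero, Nat.zero_mul, pow_zero, one_mul]
            split_ifs <;> ring
          · simp only [Nat.add_sub_cancel, hm b']
            split_ifs <;> ring
        refine ⟨hc2, ?_⟩
        have hkey : c₁ (a : ℤ) b c = X ^ (2 * (a + b + c)) * c₂ (a : ℤ) b c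
            - X ^ (2 * (a + b + c)) * c₁ (a : ℤ) b ((c : ℤ) - 1) + c₁ (a : ℤ) b ((c : ℤ) - 1) := by
          linear_combination h1 - X ^ (2 * (a + b + c)) * h2
        rw [hkey, hc2, hC]
        rcases c with _ | c'
        · simp only [reduceIte, if_pos rfl, mul_zero, sub_zero, add_zero]
          ring
        · rw [if_neg (Nat.succ_ne_zero c')]
          simp only [Nat.add_sub_cancel]
          have habs := congrArg (fun p : Polynomial ℤ => p.comp (X ^ 2)) (qmult_absorb a b c')
          simp only [mul_comp, sub_comp, one_comp, X_pow_comp, ← pow_mul] at habs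
          linear_combination (-(X ^ (b * (b - 1) + 2 * a + 2 * b))) * habs
  intro a b c
  exact (key (a + b + c) a b c rfl).2
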